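/- Distinct maximal abstract paths of a word are disjoint: for every position i of a word σ over a pushdown alphabet, there is exactly one maximal abstract path of σ visiting position i. -/
import Mathlib


inductive SymKind where
  | call | ret | intl
deriving DecidableEq

/-- Well-matched words over a pushdown alphabet, where `k` assigns to each
letter its kind (call, return, or internal). -/
inductive WellMatched {A : Type*} (k : A → SymKind) : List A → Prop
  | nil : WellMatched k []
  | int {a : A} {s : List A} : k a = SymKind.intl → WellMatched k s →
      WellMatched k (a :: s)
  | matched {c r : A} {s s' : List A} : k c = SymKind.call → k r = SymKind.ret →
      WellMatched k s → WellMatched k s' →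
      WellMatched k (c :: (s ++ r :: s'))

/-- Number of call symbols in a finite word. -/
def callCount {A : Type*} (k : A → SymKind) (s : List A) : ℕ :=
  s.countP (fun a => decide (k a = SymKind.call))

/-- Number of return symbols in a finite word. -/
def retCount {A : Type*} (k : A → SymKind) (s : List A) : ℕ :=
  s.countP (fun a => decide (k a = SymKind.ret))

/-- The finite subword `σ[i, j-1]` of the infinite word `σ` (letters at
positions `i, i+1, ..., j-1`). -/
def wordSlice {A : Type*} (σ : ℕ → A) (i j : ℕ) : List A :=
  (List.range (j - i)).map fun n => σ (i + n)

/-- `j` is a matching return of position `i`: `j > i`, `j` is a return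
position, and the subword `σ[i+1, j-1]` is well-matched. -/
def MatchRet {A : Type*} (k : A → SymKind) (σ : ℕ → A) (i j : ℕ) : Prop :=
  i < j ∧ k (σ j) = SymKind.ret ∧ WellMatched k (wordSlice σ (i + 1) j)

/-- The abstract-successor relation `SUCC(abs, σ, i) = j`. -/
def AbsSucc {A : Type*} (k : A → SymKind) (σ : ℕ → A) (i j : ℕ) : Prop :=
  if k (σ i) = SymKind.call then MatchRet k σ i j
  else j = i + 1 ∧ k (σ (i + 1)) ≠ SymKind.ret

/-- `j` is a candidate caller of `i`: a call position `j < i` whose abstract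
successor is undefined or greater than `i`. -/
def CallerCand {A : Type*} (k : A → SymKind) (σ : ℕ → A) (i j : ℕ) : Prop :=
  j < i ∧ k (σ j) = SymKind.call ∧ ∀ m, AbsSucc k σ j m → i < m

/-- `j` is the caller of `i`: the greatest candidate caller. -/
def Caller {A : Type*} (k : A → SymKind) (σ : ℕ → A) (i j : ℕ) : Prop :=
  CallerCand k σ i j ∧ ∀ j', CallerCand k σ i j' → j' ≤ j

/-- `S` is a maximal abstract path (MAP): the set of positions reachable via
the abstract successor from a position `i0` with no abstract predecessor. -/
def IsMAP {A : Type*} (k : A → SymKind) (σ : ℕ → A) (S : Set ℕ) : Prop :=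
  ∃ i0, (¬ ∃ p, AbsSucc k σ p i0) ∧
    S = {j | Relation.ReflTransGen (AbsSucc k σ) i0 j}

/-- The set of positions of the (unique) maximal abstract path visiting `i`. -/
def PosA {A : Type*} (k : A → SymKind) (σ : ℕ → A) (i : ℕ) : Set ℕ :=
  {j | Relation.ReflTransGen (AbsSucc k σ) i j ∨
       Relation.ReflTransGen (AbsSucc k σ) j i}

/-- The set of positions of the caller path of `σ` from `i`. -/
def PosC {A : Type*} (k : A → SymKind) (σ : ℕ → A) (i : ℕ) : Set ℕ :=
  {j | Relation.ReflTransGen (fun a b => Caller k σ a b) i j}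

lemma wm_count {A : Type*} {k : A → SymKind} {s : List A} (h : WellMatched k s) :
    callCount k s = retCount k s := by
  induction h with
  | nil => rfl
  | int ha _ ih =>
      simp [callCount, retCount, List.countP_cons, ha] at *
      omega
  | matched hc hr _ _ ih1 ih2 =>
      simp [callCount, retCount, List.countP_cons, List.countP_append, hc, hr] at *
      omega

lemma wm_suffix {A : Type*} {k : A → SymKind} {s : List A} (h : WellMatched k s) :
    ∀ s1 s2, s = s1 ++ s2 → callCount k s2 ≤ retCount k s2 := by
  induction h with
  | nil =>
      intro s1 s2 heq
      rcases List.append_eq_nil_iff.mp heq.symm with ⟨-, h2⟩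
      simp [h2, callCount, retCount]
  | @int a s ha hs ih =>
      intro s1 s2 heq
      cases s1 with
      | nil =>
          simp at heq
          subst heq
          have := wm_count hs
          simp [callCount, retCount, List.countP_cons, ha] at *
          omega
      | cons b t =>
          simp at heq
          exact ih t s2 heq.2.symm.symm
  | @matched c r s s' hc hr hs hs' ih1 ih2 =>
      intro s1 s2 heq
      cases s1 with
      | nil =>
          simp at heq
          subst heq
          have := wm_count (WellMatched.matched hc hr hs hs')
          omega
      | cons b t =>
          simp at heq
          have heq2 : s ++ r :: s' = t ++ s2 := heq.2
          rcases List.append_eq_append_iff.mp heq2 with ⟨u, hu1, hu2⟩ | ⟨u, hu1, hu2⟩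
          · -- t = s ++ u, u ++ s2 = r :: s'
            cases u with
            | nil =>
                simp at hu2
                subst hu2
                have := wm_count hs'
                simp [callCount, retCount, List.countP_cons, hr] at *
                omega
            | cons x u' =>
                simp at hu2
                exact ih2 u' s2 hu2.2.symm.symm
          · -- s = t ++ u, s2 = u ++ r :: s'
            subst hu2
            have h1 := ih1 t u hu1
            have := wm_count hs'
            simp [callCount, retCount, List.countP_cons, List.countP_append, hr] at *
            omega

lemma wordSlice_cons {A : Type*} (σ : ℕ → A) {q i : ℕ} (h : q < i) :
    wordSlice σ q i = σ q :: wordSlice σ (q + 1) i := by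
  unfold wordSlice
  have h1 : i - q = (i - (q + 1)) + 1 := by omega
  rw [h1, List.range_succ_eq_map]
  simp [Function.comp, Nat.add_assoc, Nat.add_comm 1]

lemma wordSlice_append {A : Type*} (σ : ℕ → A) {a b c : ℕ} (h1 : a ≤ b) (h2 : b ≤ c) :
    wordSlice σ a c = wordSlice σ a b ++ wordSlice σ b c := by
  unfold wordSlice
  have h3 : c - a = (b - a) + (c - b) := by omega
  rw [h3, List.range_add, List.map_append, List.map_map]
  congr 1
  apply List.map_congr_left
  intro x hx
  simp [Function.comp]
  congr 1
  omega

lemma absSucc_lt {A : Type*} {k : A → SymKind} {σ : ℕ → A} {p q : ℕ}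
    (h : AbsSucc k σ p q) : p < q := by
  unfold AbsSucc at h
  split at h
  · exact h.1
  · omega

/-- No two distinct call positions can have the same matching return. -/
lemma matchRet_back {A : Type*} {k : A → SymKind} {σ : ℕ → A} {p q i : ℕ}
    (hpq : p < q) (hp : MatchRet k σ p i) (hq : MatchRet k σ q i)
    (hqc : k (σ q) = SymKind.call) : False := by
  obtain ⟨hpi, -, hwp⟩ := hp
  obtain ⟨hqi, -, hwq⟩ := hq
  have hsplit : wordSlice σ (p + 1) i =
      wordSlice σ (p + 1) q ++ wordSlice σ q i := wordSlice_append σ (by omega) (by omega)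
  have hcons : wordSlice σ q i = σ q :: wordSlice σ (q + 1) i := wordSlice_cons σ (by omega)
  have hsuf := wm_suffix hwp (wordSlice σ (p + 1) q) (wordSlice σ q i) hsplit
  rw [hcons] at hsuf
  have := wm_count hwq
  simp [callCount, retCount, List.countP_cons, hqc] at hsuf this
  omega

lemma absSucc_back_unique {A : Type*} {k : A → SymKind} {σ : ℕ → A} {p q i : ℕ}
    (hp : AbsSucc k σ p i) (hq : AbsSucc k σ q i) : p = q := by
  unfold AbsSucc at hp hq
  split at hp <;> split at hq
  · -- both calls
    rename_i hpc hqc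
    rcases lt_trichotomy p q with h | h | h
    · exact absurd (matchRet_back h hp hq hqc) id
    · exact h
    · exact absurd (matchRet_back h hq hp hpc) id
  · -- p call, q not call: i = q + 1, k (σ i) ≠ ret, but MatchRet says ret
    obtain ⟨rfl, hnr⟩ := hq
    exact absurd hp.2.1 hnr
  · obtain ⟨rfl, hnr⟩ := hp
    exact absurd hq.2.1 hnr
  · omega

lemma rtg_comparable {A : Type*} {k : A → SymKind} {σ : ℕ → A} :
    ∀ n a b, Relation.ReflTransGen (AbsSucc k σ) a n →
      Relation.ReflTransGen (AbsSucc k σ) b n →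
      Relation.ReflTransGen (AbsSucc k σ) a b ∨
      Relation.ReflTransGen (AbsSucc k σ) b a := by
  intro n
  induction n using Nat.strong_induction_on with
  | _ n ih =>
    intro a b ha hb
    rcases ha.cases_tail with rfl | ⟨c, hac, hcn⟩
    · right; exact hb
    rcases hb.cases_tail with rfl | ⟨d, hbd, hdn⟩
    · left; exact ha
    have hcd : c = d := absSucc_back_unique hcn hdn
    subst hcd
    exact ih c (absSucc_lt hcn) a b hac hbd

/-- Every position has a MAP origin reaching it. -/
lemma exists_origin {A : Type*} (k : A → SymKind) (σ : ℕ → A) :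
    ∀ i, ∃ i0, (¬ ∃ p, AbsSucc k σ p i0) ∧
      Relation.ReflTransGen (AbsSucc k σ) i0 i := by
  intro i
  induction i using Nat.strong_induction_on with
  | _ i ih =>
    by_cases h : ∃ p, AbsSucc k σ p i
    · obtain ⟨p, hp⟩ := h
      obtain ⟨i0, h0, hr⟩ := ih p (absSucc_lt hp)
      exact ⟨i0, h0, hr.tail hp⟩
    · exact ⟨i, h, Relation.ReflTransGen.refl⟩

/-- for every position `i` there is exactly one maximal abstract
path visiting `i`. -/
theorem map_unique {A : Type*} (k : A → SymKind) (σ : ℕ → A) (i : ℕ) :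
    ∃! S : Set ℕ, IsMAP k σ S ∧ i ∈ S := by
  obtain ⟨i0, h0, hr⟩ := exists_origin k σ i
  refine ⟨{j | Relation.ReflTransGen (AbsSucc k σ) i0 j}, ⟨⟨i0, h0, rfl⟩, hr⟩, ?_⟩
  rintro S ⟨⟨i1, h1, rfl⟩, hi1⟩
  have hi1' : Relation.ReflTransGen (AbsSucc k σ) i1 i := hi1
  have hcomp := rtg_comparable i i1 i0 hi1' hr
  have : i1 = i0 := by
    rcases hcomp with h | h
    · rcases h.cases_tail with rfl | ⟨c, -, hc⟩
      · rfl
      · exact absurd ⟨c, hc⟩ h0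
    · rcases h.cases_tail with rfl | ⟨c, -, hc⟩
      · rfl
      · exact absurd ⟨c, hc⟩ h1
  subst this
  rfl
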